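/- Let n and r be coprime positive integers, and consider in ℤ[t] the polynomial P = t^n * (1 + t^n + t^{2n} + ... + t^{(r-1)n})^2, i.e. P = t^n * (∑_{i=0}^{r-1} t^{n*i})^2. Then the sum over all natural numbers m divisible by r of (coefficient of t^m in P) times t^m equals r * t^{n*r}. -/

import Mathlib

open Polynomial Finset

theorem lift_map_f2 (n r : ℕ) (hn : 0 < n) (hr : 0 < r) (hnr : Nat.Coprime n r)
    (P : ℤ[X])
    (hP : P = (X : ℤ[X]) ^ n * (∑ i ∈ Finset.range r, (X : ℤ[X]) ^ (n * i)) ^ 2) :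
    (∑ m ∈ P.support, if r ∣ m then Polynomial.C (P.coeff m) * (X : ℤ[X]) ^ m else 0) =
      Polynomial.C (r : ℤ) * (X : ℤ[X]) ^ (n * r) := by
  have hcoeff : ∀ k, P.coeff k =
      ((((Finset.range r ×ˢ Finset.range r).filter
        (fun p => n + n * p.1 + n * p.2 = k)).card : ℕ) : ℤ) := by
    intro k
    subst hP
    rw [sq, Finset.sum_mul_sum]
    simp only [Finset.mul_sum, ← pow_add]
    rw [← Finset.sum_product', Polynomial.finset_sum_coeff]
    simp only [Polynomial.coeff_X_pow]
    rw [Finset.card_filter]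
    push_cast
    exact Finset.sum_congr rfl fun p _ => by simp [eq_comm, add_assoc]
  have hkey : ∀ k, r ∣ k → P.coeff k = if k = n * r then (r : ℤ) else 0 := by
    intro k hk
    rw [hcoeff k]
    by_cases hknr : k = n * r
    · subst hknr
      rw [if_pos rfl]
      have hcard : ((Finset.range r ×ˢ Finset.range r).filter
          (fun p => n + n * p.1 + n * p.2 = n * r)).card = (Finset.range r).card := by
        apply Finset.card_nbij' (fun p => p.1) (fun i => (i, r - 1 - i))
        · intro p hp
          simp only [Finset.mem_coe, Finset.mem_filter, Finset.mem_product, Finset.mem_range] at hp ⊢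
          exact hp.1.1
        · intro i hi
          simp only [Finset.mem_coe, Finset.mem_range] at hi
          simp only [Finset.mem_coe, Finset.mem_filter, Finset.mem_product, Finset.mem_range]
          refine ⟨⟨hi, by omega⟩, ?_⟩
          have h : 1 + i + (r - 1 - i) = r := by omega
          calc n + n * i + n * (r - 1 - i) = n * (1 + i + (r - 1 - i)) := by ring
            _ = n * r := by rw [h]
        · intro p hp
          simp only [Finset.mem_coe, Finset.mem_filter, Finset.mem_product, Finset.mem_range] at hp
          have h1 : n * (1 + p.1 + p.2) = n * r := by rw [← hp.2]; ring
          have h2 : 1 + p.1 + p.2 = r := Nat.eq_of_mul_eq_mul_left hn h1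
          ext <;> simp <;> omega
        · intro i hi
          rfl
      rw [hcard, Finset.card_range]
    · rw [if_neg hknr]
      norm_cast
      rw [Finset.card_eq_zero, Finset.filter_eq_empty_iff]
      intro p hp h
      simp only [Finset.mem_product, Finset.mem_range] at hp
      have h1 : n * (1 + p.1 + p.2) = k := by rw [← h]; ring
      have h2 : r ∣ 1 + p.1 + p.2 := by
        have : r ∣ n * (1 + p.1 + p.2) := h1 ▸ hk
        exact Nat.Coprime.dvd_of_dvd_mul_left hnr.symm this
      have h3 : 1 + p.1 + p.2 = r := by
        rcases h2 with ⟨c, hc⟩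
        have hc1 : c = 1 := by nlinarith [hp.1, hp.2]
        rw [hc1, mul_one] at hc
        omega
      exact hknr (by rw [← h1, h3])
  ext k
  rw [Polynomial.finset_sum_coeff]
  simp only [apply_ite (fun q : ℤ[X] => q.coeff k), Polynomial.coeff_C_mul,
    Polynomial.coeff_X_pow, Polynomial.coeff_zero, mul_ite, mul_one, mul_zero]
  have hsum : (∑ m ∈ P.support, if r ∣ m then (if k = m then P.coeff m else 0) else 0)
      = if k ∈ P.support then (if r ∣ k then P.coeff k else 0) else 0 := by
    rw [← Finset.sum_ite_eq P.support k (fun m => if r ∣ m then P.coeff m else 0)]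
    exact Finset.sum_congr rfl fun m _ => by
      by_cases h1 : k = m <;> by_cases h2 : r ∣ m <;> simp_all
  rw [hsum]
  by_cases hks : k ∈ P.support
  · rw [if_pos hks]
    by_cases hrk : r ∣ k
    · rw [if_pos hrk, hkey k hrk]
    · rw [if_neg hrk,
        if_neg (fun h : k = n * r => hrk (by rw [h]; exact ⟨n, mul_comm n r⟩))]
  · rw [if_neg hks]
    have hck : P.coeff k = 0 := Polynomial.notMem_support_iff.mp hks
    rw [if_neg ?_]
    intro h'
    have := hkey k (by rw [h']; exact ⟨n, mul_comm n r⟩)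
    rw [hck, if_pos h'] at this
    have hz : (r : ℤ) = 0 := this.symm
    simp at hz
    omega
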